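/- Let ε ∈ (0, 1/8), let k and s be integers with k ≥ 2 and s ≥ 2, let p = (1/8)·ln(min(k, s)) and x = k/p, and assume 2p + ln(2p) < 3p. Let j and r′ be positive integers with r′ ≤ j ≤ 2p and j ≤ s − 2. Let F be a family of finite sets, each of cardinality at most s, such that for every nonempty finite set S with |S| < s, the number of U ∈ F with S ⊆ U is at most Φ₂(s − |S|). Let B′ be a finite set with |B′| ≤ r′·s, and let H be a finite subfamily of {U ∈ F : |U ∩ B′| = j} with |H| > s^j · Φ₂(s − j) · e^{−4p}. Then for every v ∉ B′, the number of U ∈ H containing v is at most (e^{7p}/((s − j)·x))·|H|. -/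

import Mathlib

/-- `p_j`: equals `ε` for `j = 1` (and `j = 0`) and `ε · ln (min j k)` for `j ≥ 2`. -/
noncomputable def pstep (ε : ℝ) (k : ℕ) (j : ℕ) : ℝ :=
  if j ≤ 1 then ε else ε * Real.log (min (j : ℝ) (k : ℝ))

/-- `Φ₂(s) = k^s · s! / (p₁ p₂ ⋯ p_s)`. -/
noncomputable def Phi2 (ε : ℝ) (k : ℕ) (s : ℕ) : ℝ :=
  ((k : ℝ) ^ s * (Nat.factorial s : ℝ)) / ∏ j ∈ Finset.Icc 1 s, pstep ε k j

lemma pstep_pos {ε : ℝ} (hε : 0 < ε) {k : ℕ} (hk : 2 ≤ k) (j : ℕ) : 0 < pstep ε k j := by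
  unfold pstep
  split
  · exact hε
  · rename_i h
    push_neg at h
    refine mul_pos hε (Real.log_pos ?_)
    have h2 : (2:ℝ) ≤ min (j:ℝ) (k:ℝ) := le_min (by exact_mod_cast h) (by exact_mod_cast hk)
    linarith

lemma prod_pstep_pos {ε : ℝ} (hε : 0 < ε) {k : ℕ} (hk : 2 ≤ k) (m : ℕ) :
    0 < ∏ j ∈ Finset.Icc 1 m, pstep ε k j :=
  Finset.prod_pos fun j _ => pstep_pos hε hk j

lemma phi2_pos {ε : ℝ} (hε : 0 < ε) {k : ℕ} (hk : 2 ≤ k) (m : ℕ) : 0 < Phi2 ε k m := by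
  unfold Phi2
  apply div_pos
  · have hk0 : (0:ℝ) < k := by exact_mod_cast Nat.lt_of_lt_of_le (by norm_num) hk
    have := Nat.factorial_pos m
    positivity
  · exact prod_pstep_pos hε hk m

lemma phi2_succ {ε : ℝ} (hε : 0 < ε) {k : ℕ} (hk : 2 ≤ k) (n : ℕ) :
    Phi2 ε k n = Phi2 ε k (n+1) * pstep ε k (n+1) / ((k:ℝ) * ((n:ℝ)+1)) := by
  unfold Phi2
  rw [Finset.prod_Icc_succ_top (Nat.succ_le_succ (Nat.zero_le n))]
  have h1 : (∏ j ∈ Finset.Icc 1 n, pstep ε k j) ≠ 0 := (prod_pstep_pos hε hk n).ne'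
  have h2 : pstep ε k (n+1) ≠ 0 := (pstep_pos hε hk _).ne'
  have h3 : (k:ℝ) ≠ 0 := Nat.cast_ne_zero.2 (by omega)
  have h4 : ((n:ℝ)+1) ≠ 0 := by positivity
  rw [pow_succ, Nat.factorial_succ]
  push_cast
  field_simp

/-- For `v ∉ B′`, the number of `U ∈ H` containing `v` is at most
`(e^{7p}/((s − j)·x))·|H|`. -/
theorem statement15 (α : Type*) [DecidableEq α] (ε : ℝ) (hε0 : 0 < ε) (hε : ε < 1 / 8)
    (k s : ℕ) (hk : 2 ≤ k) (hs : 2 ≤ s)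
    (p x : ℝ) (hp : p = 1 / 8 * Real.log (min (k : ℝ) (s : ℝ))) (hx : x = (k : ℝ) / p)
    (hln : 2 * p + Real.log (2 * p) < 3 * p)
    (j r' : ℕ) (hj : 0 < j) (hr' : 0 < r') (hr'j : r' ≤ j)
    (hj2p : (j : ℝ) ≤ 2 * p) (hjs : j ≤ s - 2)
    (F : Finset (Finset α)) (hcard : ∀ U ∈ F, U.card ≤ s)
    (hsup : ∀ S : Finset α, S.Nonempty → S.card < s →
      ((F.filter fun U => S ⊆ U).card : ℝ) ≤ Phi2 ε k (s - S.card))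
    (B' : Finset α) (hB' : B'.card ≤ r' * s)
    (H : Finset (Finset α)) (hH : H ⊆ F.filter fun U => (U ∩ B').card = j)
    (hHcard : (s : ℝ) ^ j * Phi2 ε k (s - j) * Real.exp (-(4 * p)) < (H.card : ℝ)) :
    ∀ v ∉ B', ((H.filter fun U => v ∈ U).card : ℝ) ≤
      Real.exp (7 * p) / (((s : ℝ) - (j : ℝ)) * x) * (H.card : ℝ) := by
  intro v hv
  have hjs' : j + 2 ≤ s := by omega
  set n : ℕ := s - j - 1 with hn
  have hmn : s - j = n + 1 := by omega
  have hsj1 : s - (j + 1) = n := by omega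
  -- positivity of p
  have hp0 : 0 < p := by
    rw [hp]
    apply mul_pos (by norm_num)
    apply Real.log_pos
    have h2 : (2:ℝ) ≤ min (k:ℝ) (s:ℝ) := le_min (by exact_mod_cast hk) (by exact_mod_cast hs)
    linarith
  have hk0 : (0:ℝ) < k := by exact_mod_cast Nat.lt_of_lt_of_le (by norm_num) hk
  have hcast : ((n:ℝ)+1) = (s:ℝ) - (j:ℝ) := by
    have h1 : ((n+1 : ℕ):ℝ) = ((s - j : ℕ):ℝ) := by rw [hmn]
    have h2 : ((s - j : ℕ):ℝ) = (s:ℝ) - (j:ℝ) := by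
      rw [Nat.cast_sub (by omega)]
    push_cast at h1
    linarith
  have hsjR : (0:ℝ) < (s:ℝ) - (j:ℝ) := by
    rw [← hcast]; positivity
  -- pstep bound
  have hpstep_le : pstep ε k (n+1) ≤ p := by
    unfold pstep
    rw [if_neg (by omega)]
    rw [hp]
    have hmin1 : (1:ℝ) ≤ min ((n+1 : ℕ):ℝ) (k:ℝ) := by
      apply le_min
      · exact_mod_cast Nat.one_le_iff_ne_zero.2 (by omega)
      · exact_mod_cast (by omega : 1 ≤ k)
    have hminle : min ((n+1 : ℕ):ℝ) (k:ℝ) ≤ min (k:ℝ) (s:ℝ) := by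
      apply le_min
      · exact min_le_right _ _
      · exact le_trans (min_le_left _ _) (by exact_mod_cast (by omega : n + 1 ≤ s))
    have hlog := Real.log_le_log (by linarith) hminle
    have hlognn : 0 ≤ Real.log (min ((n+1 : ℕ):ℝ) (k:ℝ)) :=
      Real.log_nonneg hmin1
    nlinarith
  -- counting via biUnion over j-subsets of B'
  have hsubset : (H.filter fun U => v ∈ U) ⊆
      (B'.powersetCard j).biUnion (fun T => F.filter fun U => insert v T ⊆ U) := by
    intro U hU
    simp only [Finset.mem_filter] at hU
    obtain ⟨hUH, hvU⟩ := hU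
    have hUF := hH hUH
    simp only [Finset.mem_filter] at hUF
    refine Finset.mem_biUnion.2 ⟨U ∩ B', ?_, ?_⟩
    · exact Finset.mem_powersetCard.2 ⟨Finset.inter_subset_right, hUF.2⟩
    · exact Finset.mem_filter.2 ⟨hUF.1, Finset.insert_subset hvU Finset.inter_subset_left⟩
  have hcount : ((H.filter fun U => v ∈ U).card : ℝ) ≤ (B'.card.choose j : ℝ) * Phi2 ε k n := by
    calc ((H.filter fun U => v ∈ U).card : ℝ)
        ≤ (((B'.powersetCard j).biUnion (fun T => F.filter fun U => insert v T ⊆ U)).card : ℝ) := by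
          exact_mod_cast Finset.card_le_card hsubset
      _ ≤ ∑ T ∈ B'.powersetCard j, ((F.filter fun U => insert v T ⊆ U).card : ℝ) := by
          exact_mod_cast Finset.card_biUnion_le
      _ ≤ ∑ T ∈ B'.powersetCard j, Phi2 ε k n := by
          apply Finset.sum_le_sum
          intro T hT
          obtain ⟨hTB, hTcard⟩ := Finset.mem_powersetCard.1 hT
          have hvT : v ∉ T := fun h => hv (hTB h)
          have hScard : (insert v T).card = j + 1 := by
            rw [Finset.card_insert_of_notMem hvT, hTcard]
          have := hsup (insert v T) (Finset.insert_nonempty v T) (by omega)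
          rwa [hScard, hsj1] at this
      _ = (B'.card.choose j : ℝ) * Phi2 ε k n := by
          rw [Finset.sum_const, Finset.card_powersetCard, nsmul_eq_mul]
  -- choose bound
  have hjj : (j:ℝ)^j / (Nat.factorial j : ℝ) ≤ Real.exp j := by
    have h1 : (j:ℝ)^j / (Nat.factorial j : ℝ) ≤
        ∑ i ∈ Finset.range (j+1), (j:ℝ)^i / (Nat.factorial i : ℝ) := by
      apply Finset.single_le_sum (f := fun i => (j:ℝ)^i / (Nat.factorial i : ℝ))
      · intro i _
        positivity
      · exact Finset.self_mem_range_succ j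
    have h2 := Real.sum_le_exp_of_nonneg (by positivity : (0:ℝ) ≤ (j:ℝ)) (j+1)
    exact le_trans h1 h2
  have hchoose : (B'.card.choose j : ℝ) ≤ Real.exp j * (s:ℝ)^j := by
    calc (B'.card.choose j : ℝ) ≤ ((r'*s).choose j : ℝ) := by
          exact_mod_cast Nat.choose_le_choose j hB'
      _ ≤ ((r'*s : ℕ):ℝ)^j / (Nat.factorial j : ℝ) := Nat.choose_le_pow_div j (r'*s)
      _ ≤ ((j:ℝ)*(s:ℝ))^j / (Nat.factorial j : ℝ) := by
          have hb : ((r'*s : ℕ):ℝ) ≤ (j:ℝ)*(s:ℝ) := by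
            push_cast
            have : (r':ℝ) ≤ (j:ℝ) := by exact_mod_cast hr'j
            have hs0 : (0:ℝ) ≤ (s:ℝ) := by positivity
            nlinarith
          gcongr
      _ = (j:ℝ)^j / (Nat.factorial j : ℝ) * (s:ℝ)^j := by rw [mul_pow]; ring
      _ ≤ Real.exp j * (s:ℝ)^j := by
          apply mul_le_mul_of_nonneg_right hjj (by positivity)
  -- assemble
  have hΦpos : 0 < Phi2 ε k (n+1) := phi2_pos hε0 hk _
  have hqpos := pstep_pos hε0 hk (n+1)
  have hx0 : 0 < x := by rw [hx]; positivity
  have hc0 : 0 ≤ Real.exp (7*p) / (((s:ℝ)-(j:ℝ))*x) := by positivity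
  have key : Real.exp (j:ℝ) * pstep ε k (n+1) ≤ Real.exp (3*p) * p :=
    mul_le_mul (Real.exp_le_exp.2 (by linarith)) hpstep_le hqpos.le (Real.exp_nonneg _)
  rw [hmn] at hHcard
  calc ((H.filter fun U => v ∈ U).card : ℝ)
      ≤ (B'.card.choose j : ℝ) * Phi2 ε k n := hcount
    _ ≤ (Real.exp j * (s:ℝ)^j) * Phi2 ε k n :=
        mul_le_mul_of_nonneg_right hchoose (phi2_pos hε0 hk n).le
    _ = Real.exp (j:ℝ) * pstep ε k (n+1) *
        ((s:ℝ)^j * Phi2 ε k (n+1) / ((k:ℝ)*((n:ℝ)+1))) := by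
        rw [phi2_succ hε0 hk n]; ring
    _ ≤ Real.exp (3*p) * p * ((s:ℝ)^j * Phi2 ε k (n+1) / ((k:ℝ)*((n:ℝ)+1))) := by
        apply mul_le_mul_of_nonneg_right key (by positivity)
    _ = Real.exp (7*p) / (((s:ℝ)-(j:ℝ))*x) *
        ((s:ℝ)^j * Phi2 ε k (n+1) * Real.exp (-(4*p))) := by
        rw [hx, ← hcast, show (7:ℝ)*p = 3*p + 4*p by ring, Real.exp_add, Real.exp_neg]
        have h1 : ((n:ℝ)+1) ≠ 0 := by positivity
        have h2 : (k:ℝ) ≠ 0 := ne_of_gt hk0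
        have h3 : p ≠ 0 := ne_of_gt hp0
        have h4 : Real.exp (4*p) ≠ 0 := (Real.exp_pos _).ne'
        field_simp
    _ ≤ Real.exp (7*p) / (((s:ℝ)-(j:ℝ))*x) * (H.card : ℝ) :=
        mul_le_mul_of_nonneg_left hHcard.le hc0
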